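/- Limited-fleet Bellman recursion correctness: define p(0,0) = 0, p(k,t) = +∞ for t < k, and p(k+1,t) = min over k ≤ i < t with Q(t) − Q(i) ≤ Qcap of p(k,i) + c(i,t). Then p(k,t) equals the minimum cost of a feasible partition of (1,…,t) into exactly k consecutive segments each with total demand at most Qcap (and equals +∞ if no such partition exists). -/

import Mathlib

noncomputable def erealAddIso (a : ℝ) : EReal ≃o EReal where
  toFun x := x + a
  invFun x := x - a
  left_inv x := EReal.add_sub_cancel_right
  right_inv x := by
    simp only
    rw [sub_eq_add_neg, add_assoc]
    norm_cast
    simp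
  map_rel_iff' := by
    intro x y
    exact (EReal.addLECancellable_coe a).add_le_add_iff_right

lemma ereal_sInf_add (S : Set EReal) (a : ℝ) :
    sInf ((fun x => x + (a : EReal)) '' S) = sInf S + a := by
  have h := (OrderIso.map_sInf (erealAddIso a) S).symm
  rw [sInf_image]
  exact h

lemma fin_strictMono_le {N : ℕ} {s : Fin (N + 1) → ℕ} (hs : StrictMono s)
    (hs0 : s 0 = 0) (j : Fin (N + 1)) : (j : ℕ) ≤ s j := by
  obtain ⟨v, hv⟩ := j
  induction v with
  | zero => simp [show (⟨0, hv⟩ : Fin (N + 1)) = 0 from rfl, hs0]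
  | succ v ih =>
    have h1 : v < N + 1 := by omega
    have h2 := hs (show (⟨v, h1⟩ : Fin (N + 1)) < ⟨v + 1, hv⟩ by simp [Fin.lt_def])
    have h3 := ih h1
    simp only at h2 h3 ⊢
    omega

/-- Correctness of the limited-fleet Bellman recursion: `p k t` equals the minimum
cost (in `ℝ ∪ {+∞}`) of a feasible partition of `(1,…,t)` into exactly `k`
consecutive segments each with total demand at most `Qcap`. -/
theorem split_limited_fleet_bellman_correct (n m : ℕ) (hn : 1 ≤ n) (hm : 1 ≤ m)
    (Qcap : ℝ) (hQcap : 0 < Qcap) (Q : ℕ → ℝ) (hQ0 : Q 0 = 0) (hQmono : Monotone Q)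
    (c : ℕ → ℕ → ℝ) (p : ℕ → ℕ → EReal)
    (hp00 : p 0 0 = 0)
    (hpinf : ∀ k t, t < k → p k t = ⊤)
    (hp0 : ∀ t, 1 ≤ t → p 0 t = ⊤)
    (hrec : ∀ k t, 1 ≤ t → t ≤ n →
      p (k + 1) t = sInf {v : EReal | ∃ i, k ≤ i ∧ i < t ∧ Q t - Q i ≤ Qcap ∧
        v = p k i + (c i t : EReal)}) :
    ∀ k t, k ≤ m → t ≤ n →
      p k t = sInf {v : EReal | ∃ s : Fin (k + 1) → ℕ, StrictMono s ∧
        s 0 = 0 ∧ s (Fin.last k) = t ∧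
        (∀ j : Fin k, Q (s j.succ) - Q (s j.castSucc) ≤ Qcap) ∧
        v = ((∑ j : Fin k, c (s j.castSucc) (s j.succ) : ℝ) : EReal)} := by
  intro k
  induction k with
  | zero =>
    intro t _ _
    rcases Nat.eq_zero_or_pos t with h0 | h1
    · subst h0
      rw [hp00]
      apply le_antisymm
      · apply le_sInf
        rintro v ⟨s, _, _, _, _, rfl⟩
        simp
      · apply sInf_le
        refine ⟨fun _ => 0, ?_, rfl, rfl, fun j => j.elim0, by simp⟩
        intro a b hab
        have ha := a.isLt
        have hb := b.isLt
        rw [Fin.lt_def] at hab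
        omega
    · rw [hp0 t h1]
      symm
      have hempty : {v : EReal | ∃ s : Fin 1 → ℕ, StrictMono s ∧
          s 0 = 0 ∧ s (Fin.last 0) = t ∧
          (∀ j : Fin 0, Q (s j.succ) - Q (s j.castSucc) ≤ Qcap) ∧
          v = ((∑ j : Fin 0, c (s j.castSucc) (s j.succ) : ℝ) : EReal)} = ∅ := by
        ext v
        simp only [Set.mem_setOf_eq, Set.mem_empty_iff_false, iff_false]
        rintro ⟨s, _, hs0, hsl, _, _⟩
        have : Fin.last 0 = (0 : Fin 1) := rfl
        rw [this, hs0] at hsl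
        omega
      rw [hempty, sInf_empty]
  | succ k ih =>
    intro t hk ht
    rcases Nat.eq_zero_or_pos t with h0 | h1
    · subst h0
      rw [hpinf (k + 1) 0 (Nat.succ_pos k)]
      symm
      have hempty : {v : EReal | ∃ s : Fin (k + 2) → ℕ, StrictMono s ∧
          s 0 = 0 ∧ s (Fin.last (k + 1)) = 0 ∧
          (∀ j : Fin (k + 1), Q (s j.succ) - Q (s j.castSucc) ≤ Qcap) ∧
          v = ((∑ j : Fin (k + 1), c (s j.castSucc) (s j.succ) : ℝ) : EReal)} = ∅ := by
        ext v
        simp only [Set.mem_setOf_eq, Set.mem_empty_iff_false, iff_false]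
        rintro ⟨s, hs, hs0, hsl, _, _⟩
        have hlt : (0 : Fin (k + 2)) < Fin.last (k + 1) := by
          rw [Fin.lt_def]; simp
        have := hs hlt
        rw [hs0, hsl] at this
        omega
      rw [hempty, sInf_empty]
    · rw [hrec k t h1 ht]
      apply le_antisymm
      · apply le_sInf
        rintro v ⟨s, hs, hs0, hsl, hcap, rfl⟩
        set i := s ((Fin.last k).castSucc) with hi
        have hk_le : k ≤ i := by
          have := fin_strictMono_le hs hs0 ((Fin.last k).castSucc)
          simpa using this
        have hi_lt : i < t := by
          have := hs (Fin.castSucc_lt_last (Fin.last k))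
          rwa [hsl] at this
        have hQc : Q t - Q i ≤ Qcap := by
          have := hcap (Fin.last k)
          rwa [Fin.succ_last, hsl] at this
        refine le_trans (sInf_le ⟨i, hk_le, hi_lt, hQc, rfl⟩) ?_
        rw [ih i (le_trans (Nat.le_succ k) hk) (le_trans hi_lt.le ht)]
        have hmem : ((∑ j : Fin k, c ((s ∘ Fin.castSucc) j.castSucc)
            ((s ∘ Fin.castSucc) j.succ) : ℝ) : EReal) ∈
            {v : EReal | ∃ s' : Fin (k + 1) → ℕ, StrictMono s' ∧
              s' 0 = 0 ∧ s' (Fin.last k) = i ∧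
              (∀ j : Fin k, Q (s' j.succ) - Q (s' j.castSucc) ≤ Qcap) ∧
              v = ((∑ j : Fin k, c (s' j.castSucc) (s' j.succ) : ℝ) : EReal)} := by
          refine ⟨s ∘ Fin.castSucc, hs.comp Fin.strictMono_castSucc, ?_, rfl, ?_, rfl⟩
          · simpa using hs0
          · intro j
            have := hcap j.castSucc
            simp only [Function.comp_apply]
            rwa [Fin.succ_castSucc] at this
        calc sInf _ + (c i t : EReal)
            ≤ ((∑ j : Fin k, c ((s ∘ Fin.castSucc) j.castSucc)
              ((s ∘ Fin.castSucc) j.succ) : ℝ) : EReal) + (c i t : EReal) :=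
              add_le_add_left (sInf_le hmem) _
          _ = _ := by
              rw [← EReal.coe_add]
              congr 1
              rw [Fin.sum_univ_castSucc, Fin.succ_last, hsl, hi]
              congr 1
      · apply le_sInf
        rintro v ⟨i, hki, hit, hQc, rfl⟩
        rw [ih i (le_trans (Nat.le_succ k) hk) (le_trans hit.le ht), ← ereal_sInf_add]
        apply le_sInf
        rintro w ⟨x, ⟨s', hs', hs'0, hs'l, hcap', rfl⟩, rfl⟩
        apply sInf_le
        refine ⟨Fin.snoc s' t, ?_, ?_, ?_, ?_, ?_⟩
        · intro a b hab
          rcases Fin.eq_castSucc_or_eq_last b with ⟨b', rfl⟩ | rfl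
          · rcases Fin.eq_castSucc_or_eq_last a with ⟨a', rfl⟩ | rfl
            · rw [Fin.snoc_castSucc, Fin.snoc_castSucc]
              exact hs' (by rwa [Fin.castSucc_lt_castSucc_iff] at hab)
            · exact absurd (lt_trans hab (Fin.castSucc_lt_last b')) (lt_irrefl _)
          · rcases Fin.eq_castSucc_or_eq_last a with ⟨a', rfl⟩ | rfl
            · rw [Fin.snoc_castSucc, Fin.snoc_last]
              exact lt_of_le_of_lt (by rw [← hs'l]; exact hs'.monotone (Fin.le_last a')) hit
            · exact absurd hab (lt_irrefl _)
        · have : (0 : Fin (k + 2)) = (0 : Fin (k + 1)).castSucc := rfl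
          rw [this, Fin.snoc_castSucc, hs'0]
        · rw [Fin.snoc_last]
        · intro j
          rcases Fin.eq_castSucc_or_eq_last j with ⟨j', rfl⟩ | rfl
          · rw [Fin.succ_castSucc, Fin.snoc_castSucc, Fin.snoc_castSucc]
            exact hcap' j'
          · rw [Fin.succ_last, Fin.snoc_last, Fin.snoc_castSucc, hs'l]
            exact hQc
        · show (((∑ j : Fin k, c (s' j.castSucc) (s' j.succ) : ℝ) : EReal) + (c i t : EReal)) = _
          rw [Fin.sum_univ_castSucc, ← EReal.coe_add]
          congr 1
          congr 1
          · apply Finset.sum_congr rfl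
            intro j _
            rw [Fin.succ_castSucc, Fin.snoc_castSucc, Fin.snoc_castSucc]
          · rw [Fin.succ_last, Fin.snoc_last, Fin.snoc_castSucc, hs'l]
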